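/- Let M be a real m×n matrix and μ > 0. Set Γ* = (M Mᵀ + μ·I)^{1/2}. Then Γ* is positive definite, and for every m×m real positive definite matrix Γ one has tr(Mᵀ Γ⁻¹ M) + μ·tr(Γ⁻¹) + tr(Γ) ≥ tr(Mᵀ (Γ*)⁻¹ M) + μ·tr((Γ*)⁻¹) + tr(Γ*) = 2 tr((M Mᵀ + μ·I)^{1/2}). -/

import Mathlib

open Matrix

/-- Over `ℝ`, `M * Mᵀ` is positive semidefinite. -/
theorem posSemidef_self_mul_transpose {m n : ℕ} (M : Matrix (Fin m) (Fin n) ℝ) :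
    (M * Mᵀ).PosSemidef := by
  simpa [Matrix.conjTranspose_eq_transpose_of_trivial] using
    Matrix.posSemidef_self_mul_conjTranspose M

/-- Over `ℝ`, `M * Mᵀ + μ • 1` is positive semidefinite when `0 < μ`. -/
theorem posSemidef_self_mul_transpose_add_smul_one {m n : ℕ}
    (M : Matrix (Fin m) (Fin n) ℝ) {μ : ℝ} (hμ : 0 < μ) :
    (M * Mᵀ + μ • (1 : Matrix (Fin m) (Fin m) ℝ)).PosSemidef := by
  refine (posSemidef_self_mul_transpose M).add ?_
  rw [Matrix.smul_one_eq_diagonal]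
  exact Matrix.posSemidef_diagonal_iff.mpr fun _ => le_of_lt hμ

/-- The square root of a positive semidefinite matrix, as defined in the older Mathlib
(`Matrix.PosSemidef.sqrt`, removed since). -/
noncomputable def Matrix.PosSemidef.sqrt {n : Type*} [Fintype n] [DecidableEq n] {A : Matrix n n ℝ}
    (hA : A.PosSemidef) : Matrix n n ℝ :=
  hA.1.eigenvectorUnitary.1 * diagonal ((↑) ∘ (√·) ∘ hA.1.eigenvalues) *
    (star hA.1.eigenvectorUnitary : Matrix n n ℝ)

lemma aux_posSemidef_sqrt {k : ℕ} {A : Matrix (Fin k) (Fin k) ℝ} (hA : A.PosSemidef) :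
    hA.sqrt.PosSemidef := by
  unfold Matrix.PosSemidef.sqrt
  have := (Matrix.posSemidef_diagonal_iff.mpr (fun i => Real.sqrt_nonneg (hA.1.eigenvalues i))).mul_mul_conjTranspose_same
    (hA.1.eigenvectorUnitary : Matrix (Fin k) (Fin k) ℝ)
  simpa [Matrix.star_eq_conjTranspose, Function.comp_def] using this

lemma aux_sqrt_mul_self {k : ℕ} {A : Matrix (Fin k) (Fin k) ℝ} (hA : A.PosSemidef) :
    hA.sqrt * hA.sqrt = A := by
  unfold Matrix.PosSemidef.sqrt
  set U := hA.1.eigenvectorUnitary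
  have hU : (star U : Matrix (Fin k) (Fin k) ℝ) * (U : Matrix (Fin k) (Fin k) ℝ) = 1 :=
    Unitary.coe_star_mul_self U
  have hD : diagonal ((↑) ∘ (√·) ∘ hA.1.eigenvalues) * diagonal ((↑) ∘ (√·) ∘ hA.1.eigenvalues)
      = diagonal (RCLike.ofReal ∘ hA.1.eigenvalues : Fin k → ℝ) := by
    rw [diagonal_mul_diagonal]
    congr 1; funext i
    simp [Real.mul_self_sqrt (hA.eigenvalues_nonneg i)]
  conv_rhs => rw [hA.1.spectral_theorem, Unitary.conjStarAlgAut_apply]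
  calc _ = (U : Matrix (Fin k) (Fin k) ℝ) * (diagonal ((↑) ∘ (√·) ∘ hA.1.eigenvalues)
        * ((star U : Matrix (Fin k) (Fin k) ℝ) * (U : Matrix (Fin k) (Fin k) ℝ))
        * diagonal ((↑) ∘ (√·) ∘ hA.1.eigenvalues)) * (star U : Matrix (Fin k) (Fin k) ℝ) := by
          simp only [Matrix.mul_assoc]
    _ = _ := by rw [hU, Matrix.mul_one, hD]

lemma aux_sqrt_posDef {k : ℕ} {A : Matrix (Fin k) (Fin k) ℝ} (hA : A.PosSemidef)
    (hApd : A.PosDef) : hA.sqrt.PosDef := by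
  refine Matrix.posDef_iff_dotProduct_mulVec.mpr ⟨(aux_posSemidef_sqrt hA).1, fun x hx => ?_⟩
  rcases lt_or_eq_of_le ((aux_posSemidef_sqrt hA).dotProduct_mulVec_nonneg x) with h | h
  · exact h
  exfalso
  have h0 : hA.sqrt *ᵥ x = 0 := ((aux_posSemidef_sqrt hA).dotProduct_mulVec_zero_iff x).mp h.symm
  have hAx : A *ᵥ x = 0 := by
    rw [← aux_sqrt_mul_self hA, ← Matrix.mulVec_mulVec, h0, Matrix.mulVec_zero]
  have := hApd.dotProduct_mulVec_pos hx
  rw [hAx] at this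
  simp at this

lemma aux_trace_nonneg {k : ℕ} {A : Matrix (Fin k) (Fin k) ℝ} (hA : A.PosSemidef) :
    0 ≤ A.trace := by
  rw [Matrix.trace]
  refine Finset.sum_nonneg fun i _ => ?_
  simpa using hA.2 (Finsupp.single i 1)

lemma aux_key {k : ℕ} {Γ S : Matrix (Fin k) (Fin k) ℝ} (hΓ : Γ.PosDef) (hS : Sᵀ = S) :
    (S - Γ)ᵀ * Γ⁻¹ * (S - Γ) = S * Γ⁻¹ * S - S - S + Γ := by
  have h1 : Γ⁻¹ * Γ = 1 := Matrix.nonsing_inv_mul Γ hΓ.det_pos.ne'.isUnit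
  have h2 : Γ * Γ⁻¹ = 1 := Matrix.mul_nonsing_inv Γ hΓ.det_pos.ne'.isUnit
  have hΓt : Γᵀ = Γ := by
    have := hΓ.isHermitian
    rwa [Matrix.IsHermitian, Matrix.conjTranspose_eq_transpose_of_trivial] at this
  rw [Matrix.transpose_sub, hS, hΓt]
  rw [Matrix.sub_mul, Matrix.sub_mul, Matrix.mul_sub, Matrix.mul_sub]
  rw [Matrix.mul_assoc S Γ⁻¹ Γ, Matrix.mul_assoc Γ Γ⁻¹ Γ, h1, h2]
  noncomm_ring

lemma aux_trace_eq {k j : ℕ} (M : Matrix (Fin k) (Fin j) ℝ) (μ : ℝ)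
    (Γ : Matrix (Fin k) (Fin k) ℝ) :
    (Mᵀ * Γ⁻¹ * M).trace + μ * (Γ⁻¹).trace
      = (Γ⁻¹ * (M * Mᵀ + μ • (1 : Matrix (Fin k) (Fin k) ℝ))).trace := by
  rw [Matrix.mul_add, Matrix.trace_add, Matrix.trace_mul_cycle Mᵀ Γ⁻¹ M,
    Matrix.trace_mul_comm (M * Mᵀ) Γ⁻¹]
  congr 1
  rw [Matrix.mul_smul, Matrix.mul_one, Matrix.trace_smul]
  simp

/-- The regularized form of the variational trace-norm formulation (Eq. (5) of the paper):
for a real `m × n` matrix `M` and `μ > 0`, the matrix `Γ* = (M Mᵀ + μ I) ^ (1/2)` is positive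
definite, and for every positive definite `Γ`,
`tr (Mᵀ Γ⁻¹ M) + μ tr (Γ⁻¹) + tr Γ ≥ tr (Mᵀ (Γ*)⁻¹ M) + μ tr ((Γ*)⁻¹) + tr Γ*`,
the latter being equal to `2 tr ((M Mᵀ + μ I) ^ (1/2))`. -/
theorem regularized_trace_norm_variational_attained
    {m n : ℕ} (M : Matrix (Fin m) (Fin n) ℝ) {μ : ℝ} (hμ : 0 < μ) :
    (posSemidef_self_mul_transpose_add_smul_one M hμ).sqrt.PosDef ∧
    (∀ Γ : Matrix (Fin m) (Fin m) ℝ, Γ.PosDef →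
      (Mᵀ * Γ⁻¹ * M).trace + μ * (Γ⁻¹).trace + Γ.trace ≥
        (Mᵀ * ((posSemidef_self_mul_transpose_add_smul_one M hμ).sqrt)⁻¹ * M).trace
          + μ * (((posSemidef_self_mul_transpose_add_smul_one M hμ).sqrt)⁻¹).trace
          + (posSemidef_self_mul_transpose_add_smul_one M hμ).sqrt.trace) ∧
    (Mᵀ * ((posSemidef_self_mul_transpose_add_smul_one M hμ).sqrt)⁻¹ * M).trace
        + μ * (((posSemidef_self_mul_transpose_add_smul_one M hμ).sqrt)⁻¹).trace
        + (posSemidef_self_mul_transpose_add_smul_one M hμ).sqrt.trace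
      = 2 * (posSemidef_self_mul_transpose_add_smul_one M hμ).sqrt.trace := by
  set A : Matrix (Fin m) (Fin m) ℝ := M * Mᵀ + μ • 1 with hAdef
  have hA := posSemidef_self_mul_transpose_add_smul_one M hμ
  set S : Matrix (Fin m) (Fin m) ℝ := hA.sqrt with hSdef
  have hApd : A.PosDef := by
    refine Matrix.PosDef.posSemidef_add (posSemidef_self_mul_transpose M) ?_
    rw [Matrix.smul_one_eq_diagonal]
    exact Matrix.posDef_diagonal_iff.mpr fun _ => hμ
  have hSpd : S.PosDef := aux_sqrt_posDef hA hApd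
  have hSS : S * S = A := aux_sqrt_mul_self hA
  have hSt : Sᵀ = S := by
    have := (aux_posSemidef_sqrt hA).1
    rwa [Matrix.IsHermitian, Matrix.conjTranspose_eq_transpose_of_trivial] at this
  -- the equality part
  have heq : (Mᵀ * S⁻¹ * M).trace + μ * (S⁻¹).trace + S.trace = 2 * S.trace := by
    have h1 : S⁻¹ * S = 1 := Matrix.nonsing_inv_mul S hSpd.det_pos.ne'.isUnit
    have : (Mᵀ * S⁻¹ * M).trace + μ * (S⁻¹).trace = S.trace := by
      rw [aux_trace_eq M μ S, ← hAdef, ← hSS, ← Matrix.mul_assoc, h1, Matrix.one_mul]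
    rw [this]; ring
  refine ⟨hSpd, fun Γ hΓ => ?_, heq⟩
  rw [heq]
  have htr : (Mᵀ * Γ⁻¹ * M).trace + μ * (Γ⁻¹).trace = (S * Γ⁻¹ * S).trace := by
    rw [aux_trace_eq M μ Γ, ← hAdef, ← hSS, ← Matrix.mul_assoc,
      Matrix.trace_mul_cycle Γ⁻¹ S S]
  have hpsd : ((S - Γ)ᵀ * Γ⁻¹ * (S - Γ)).PosSemidef := by
    have := (hΓ.inv.posSemidef).conjTranspose_mul_mul_same (S - Γ)
    rwa [Matrix.conjTranspose_eq_transpose_of_trivial] at this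
  have hnn : 0 ≤ ((S - Γ)ᵀ * Γ⁻¹ * (S - Γ)).trace := aux_trace_nonneg hpsd
  rw [aux_key hΓ hSt] at hnn
  simp only [Matrix.trace_add, Matrix.trace_sub] at hnn
  rw [htr]
  linarith
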